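/- Let 0<β<1, u_k=((1+k)/(1+β))^{1/β}, and d_β a suitable constant. Then ∑_{k=1}^{m} u_k = β·((1+m)/(1+β))^{(1+β)/β} + u_m/2 + d_β·u_m^{1−β}·(1+o(1)) as m→∞; that is, the partial sums of the lattice logarithms admit the three-term asymptotic expansion with leading term β((1+m)/(1+β))^{(1+β)/β}. -/

import Mathlib

open Filter Topology Set


lemma stolz_cesaro (a b : ℕ → ℝ) (hb : ∀ n, b n < b (n + 1))
    (hbtop : Tendsto b atTop atTop) {l : ℝ}
    (h : Tendsto (fun n => (a (n + 1) - a n) / (b (n + 1) - b n)) atTop (𝓝 l)) :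
    Tendsto (fun n => a n / b n) atTop (𝓝 l) := by
  rw [Metric.tendsto_atTop] at h ⊢
  intro ε hε
  obtain ⟨N, hN⟩ := h (ε / 2) (by linarith)
  have step : ∀ n, N ≤ n → |a (n+1) - a n - l * (b (n+1) - b n)| ≤ ε / 2 * (b (n+1) - b n) := by
    intro n hn
    have h1 := hN n hn
    rw [Real.dist_eq] at h1
    have hbn : (0:ℝ) < b (n+1) - b n := sub_pos.mpr (hb n)
    have h2 : |(a (n + 1) - a n) / (b (n + 1) - b n) - l| * (b (n+1) - b n)
        ≤ ε / 2 * (b (n+1) - b n) := by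
      apply mul_le_mul_of_nonneg_right h1.le hbn.le
    calc |a (n+1) - a n - l * (b (n+1) - b n)|
        = |(a (n + 1) - a n) / (b (n + 1) - b n) - l| * |b (n+1) - b n| := by
          rw [← abs_mul]; congr 1; field_simp
      _ = |(a (n + 1) - a n) / (b (n + 1) - b n) - l| * (b (n+1) - b n) := by
          rw [abs_of_pos hbn]
      _ ≤ _ := h2
  have key : ∀ n, N ≤ n → |a n - a N - l * (b n - b N)| ≤ ε / 2 * (b n - b N) := by
    intro n hn
    induction n, hn using Nat.le_induction with
    | base => simp
    | succ n hn ih =>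
      have := step n hn
      calc |a (n+1) - a N - l * (b (n+1) - b N)|
          = |(a n - a N - l * (b n - b N)) + (a (n+1) - a n - l * (b (n+1) - b n))| := by
            ring_nf
        _ ≤ |a n - a N - l * (b n - b N)| + |a (n+1) - a n - l * (b (n+1) - b n)| :=
            abs_add_le _ _
        _ ≤ ε / 2 * (b n - b N) + ε / 2 * (b (n+1) - b n) := add_le_add ih this
        _ = ε / 2 * (b (n+1) - b N) := by ring
  set C : ℝ := |a N - l * b N| + ε / 2 * |b N| with hC
  have hC0 : 0 ≤ C := by positivity
  obtain ⟨M, hM⟩ := eventually_atTop.mp (hbtop.eventually_ge_atTop (2 * C / ε + 1))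
  refine ⟨max N M, fun n hn => ?_⟩
  have hnN : N ≤ n := le_trans (le_max_left _ _) hn
  have hnM : M ≤ n := le_trans (le_max_right _ _) hn
  have hbn : 2 * C / ε + 1 ≤ b n := hM n hnM
  have hbnpos : 0 < b n := by
    have : 0 ≤ 2 * C / ε := div_nonneg (by linarith) hε.le
    linarith
  rw [Real.dist_eq]
  have h1 : |a n - l * b n| ≤ C + ε / 2 * b n := by
    calc |a n - l * b n| = |(a n - a N - l * (b n - b N)) + (a N - l * b N)| := by ring_nf
      _ ≤ |a n - a N - l * (b n - b N)| + |a N - l * b N| := abs_add_le _ _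
      _ ≤ ε / 2 * (b n - b N) + |a N - l * b N| := by linarith [key n hnN]
      _ ≤ C + ε / 2 * b n := by
          have : -|b N| ≤ b N := neg_abs_le _
          rw [hC]; nlinarith
  have h2 : |a n / b n - l| = |a n - l * b n| / b n := by
    rw [show a n / b n - l = (a n - l * b n) / b n by field_simp]
    rw [abs_div, abs_of_pos hbnpos]
  rw [h2]
  rw [div_lt_iff₀ hbnpos]
  have : C < ε / 2 * b n := by
    have : ε / 2 * (2 * C / ε + 1) ≤ ε / 2 * b n := by
      apply mul_le_mul_of_nonneg_left hbn (by linarith)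
    have he : ε / 2 * (2 * C / ε + 1) = C + ε / 2 := by field_simp
    linarith
  linarith [h1]


lemma hasDerivAt_one_sub_rpow (q t : ℝ) (ht : t < 1) :
    HasDerivAt (fun s : ℝ => (1 - s) ^ q) (-(q * (1 - t) ^ (q - 1))) t := by
  have h1 : HasDerivAt (fun s : ℝ => 1 - s) (-1) t := (hasDerivAt_id t).const_sub 1
  have h2 := (Real.hasDerivAt_rpow_const (x := 1 - t) (p := q)
    (Or.inl (by linarith : (1:ℝ) - t ≠ 0))).comp t h1
  refine h2.congr_deriv ?_
  ring

lemma gfun_limit (p : ℝ) (hp : 1 < p) :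
    Tendsto (fun t : ℝ => ((p+1)*t*(1+(1-t)^p)/2 - 1 + (1-t)^(p+1)) / t^3) (𝓝[>] 0)
      (𝓝 ((p+1)*p*(p-1)/12)) := by
  set G : ℝ → ℝ := fun t => (p+1)*t*(1+(1-t)^p)/2 - 1 + (1-t)^(p+1) with hG
  set G1 : ℝ → ℝ := fun t => (p+1)*((1-(1-t)^p)/2 - p*t*(1-t)^(p-1)/2) with hG1
  set G2 : ℝ → ℝ := fun t => (p+1)*p*(p-1)*t*(1-t)^(p-2)/2 with hG2
  have hd1 : ∀ t ∈ Ioo (0:ℝ) (1/2), HasDerivAt G (G1 t) t := by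
    intro t ht
    have ht1 : t < 1 := by linarith [ht.2]
    have h1 := hasDerivAt_one_sub_rpow p t ht1
    have h2 : HasDerivAt (fun s : ℝ => (1-s)^(p+1)) (-((p+1) * (1-t)^p)) t := by
      have := hasDerivAt_one_sub_rpow (p+1) t ht1
      simpa [show p+1-1 = p by ring] using this
    have h3 : HasDerivAt (fun s : ℝ => (p+1)*s*(1+(1-s)^p)/2)
        (((p+1)*(1+(1-t)^p) + (p+1)*t*(-(p * (1-t)^(p-1))))/2) t := by
      have := (((hasDerivAt_id t).const_mul (p+1)).mul (h1.const_add 1)).div_const 2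
      refine this.congr_deriv ?_
      simp only [id_eq]
      ring
    have := (h3.sub_const 1).add h2
    refine this.congr_deriv ?_
    simp only [hG1]
    ring
  have hd2 : ∀ t ∈ Ioo (0:ℝ) (1/2), HasDerivAt G1 (G2 t) t := by
    intro t ht
    have ht1 : t < 1 := by linarith [ht.2]
    have h1 := hasDerivAt_one_sub_rpow p t ht1
    have h2 : HasDerivAt (fun s : ℝ => (1-s)^(p-1)) (-((p-1) * (1-t)^(p-2))) t := by
      have := hasDerivAt_one_sub_rpow (p-1) t ht1
      simpa [show p-1-1 = p-2 by ring] using this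
    have h3 : HasDerivAt (fun s : ℝ => (1-(1-s)^p)/2 - p*s*(1-s)^(p-1)/2)
        ((-(-(p * (1-t)^(p-1))))/2 - (p*(1-t)^(p-1) + p*t*(-((p-1) * (1-t)^(p-2))))/2) t := by
      have ha := (h1.const_sub 1).div_const 2
      have hb : HasDerivAt (fun s : ℝ => p*s*(1-s)^(p-1)/2)
          ((p*(1-t)^(p-1) + p*t*(-((p-1) * (1-t)^(p-2))))/2) t := by
        have := (((hasDerivAt_id t).const_mul p).mul h2).div_const 2
        refine this.congr_deriv ?_
        simp only [id_eq]
        ring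
      exact ha.sub hb
    have := h3.const_mul (p+1)
    refine this.congr_deriv ?_
    simp only [hG2]
    ring
  have hcont : ∀ q : ℝ, ContinuousAt (fun t : ℝ => (1-t)^q) 0 := by
    intro q
    have : ContinuousAt (fun x : ℝ => x ^ q) ((fun t : ℝ => 1 - t) 0) := by
      apply Real.continuousAt_rpow_const
      norm_num
    exact this.comp (continuousAt_const.sub continuousAt_id)
  have inner : Tendsto (fun t => G1 t / (3*t^2)) (𝓝[>] (0:ℝ)) (𝓝 ((p+1)*p*(p-1)/12)) := by
    have hdiv : Tendsto (fun t => G2 t / (6*t)) (𝓝[>] (0:ℝ)) (𝓝 ((p+1)*p*(p-1)/12)) := by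
      have heq : ∀ t ∈ Ioi (0:ℝ), (p+1)*p*(p-1)*(1-t)^(p-2)/12 = G2 t / (6*t) := by
        intro t ht
        simp only [hG2]
        have : (t:ℝ) ≠ 0 := ne_of_gt ht
        field_simp
        ring
      have hc : Tendsto (fun t : ℝ => (p+1)*p*(p-1)*(1-t)^(p-2)/12) (𝓝[>] (0:ℝ))
          (𝓝 ((p+1)*p*(p-1)/12)) := by
        have := (((hcont (p-2)).tendsto.const_mul ((p+1)*p*(p-1))).div_const 12)
        simp only [sub_zero, Real.one_rpow, mul_one] at this
        exact tendsto_nhdsWithin_of_tendsto_nhds this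
      exact Tendsto.congr' (eventually_nhdsWithin_of_forall heq) hc
    apply HasDerivAt.lhopital_zero_right_on_Ioo (a := 0) (b := 1/2) (g' := fun t => 6*t)
      (by norm_num) hd2
      (fun t _ => by
        have h := (hasDerivAt_pow 2 t).const_mul 3
        refine h.congr_deriv ?_
        push_cast; ring) (fun t ht => by
        have : (0:ℝ) < t := ht.1
        positivity)
    · have hc : ContinuousAt G1 0 := by
        simp only [hG1]
        exact (((continuousAt_const.sub (hcont p)).div_const 2).sub
          (((continuousAt_const.mul continuousAt_id).mul (hcont (p-1))).div_const 2)).const_mul (p+1)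
      have h0 : G1 0 = 0 := by simp [hG1, Real.one_rpow]
      have ht := hc.tendsto
      rw [h0] at ht
      exact tendsto_nhdsWithin_of_tendsto_nhds ht
    · have h3 : Tendsto (fun t : ℝ => 3*t^2) (𝓝 0) (𝓝 0) := by
        have hcc : Continuous (fun t : ℝ => 3*t^2) := by continuity
        have := hcc.tendsto (0:ℝ)
        norm_num at this
        exact this
      exact tendsto_nhdsWithin_of_tendsto_nhds h3
    · exact hdiv
  have hzero3 : Tendsto (fun t : ℝ => t^3) (𝓝[>] (0:ℝ)) (𝓝 0) := by
    have := (continuous_pow 3 (M := ℝ)).tendsto (0:ℝ)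
    norm_num at this
    exact tendsto_nhdsWithin_of_tendsto_nhds this
  have hG0 : Tendsto G (𝓝[>] (0:ℝ)) (𝓝 0) := by
    have hc : ContinuousAt G 0 := by
      simp only [hG]
      exact ((((continuousAt_const.mul continuousAt_id).mul
        (continuousAt_const.add (hcont p))).div_const 2).sub continuousAt_const).add (hcont (p+1))
    have h0 : G 0 = 0 := by simp [hG, Real.one_rpow]
    have ht := hc.tendsto
    rw [h0] at ht
    exact tendsto_nhdsWithin_of_tendsto_nhds ht
  apply HasDerivAt.lhopital_zero_right_on_Ioo (a := 0) (b := 1/2) (g' := fun t => 3*t^2)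
    (by norm_num) hd1
    (fun t _ => by
      have h := hasDerivAt_pow 3 t
      norm_num at h
      exact h) (fun t ht => by
      have : (0:ℝ) < t := ht.1
      positivity)
    hG0 hzero3 inner

lemma hfun_limit (p : ℝ) (hp : 1 < p) :
    Tendsto (fun t : ℝ => t / (1 - (1-t)^(p-1))) (𝓝[>] 0) (𝓝 (p-1)⁻¹) := by
  have hH : HasDerivAt (fun t : ℝ => 1 - (1-t)^(p-1)) (p-1) 0 := by
    have := (hasDerivAt_one_sub_rpow (p-1) 0 one_pos).const_sub 1
    simpa [Real.one_rpow] using this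
  have hslope := hasDerivAt_iff_tendsto_slope.mp hH
  have hmono : 𝓝[>] (0:ℝ) ≤ 𝓝[≠] (0:ℝ) :=
    nhdsWithin_mono 0 (fun x hx => ne_of_gt hx)
  have h1 : Tendsto (fun t : ℝ => (1 - (1-t)^(p-1)) / t) (𝓝[>] 0) (𝓝 (p-1)) := by
    have := hslope.mono_left hmono
    apply this.congr
    intro t
    simp [slope_def_field, Real.one_rpow]
  have h2 := h1.inv₀ (by intro h; rw [sub_eq_zero] at h; exact (ne_of_gt hp) h)
  apply h2.congr
  intro t
  rw [inv_div]


noncomputable def u (β : ℝ) (k : ℕ) : ℝ := ((1 + k : ℝ) / (1 + β)) ^ (1 / β)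

set_option maxHeartbeats 1600000 in
theorem lattice_log_sum_expansion (β : ℝ) (hβ0 : 0 < β) (hβ1 : β < 1) :
    ∃ d : ℝ, Tendsto (fun m : ℕ =>
        ((∑ k ∈ Finset.Icc 1 m, u β k) -
            β * ((1 + m : ℝ) / (1 + β)) ^ ((1 + β) / β) - u β m / 2) /
          (u β m) ^ (1 - β))
      atTop (nhds d) := by
  have h1β : (0:ℝ) < 1 + β := by linarith
  set p : ℝ := 1 / β with hpdef
  have hp1 : 1 < p := by
    rw [hpdef, lt_div_iff₀ hβ0]
    linarith
  have hp0 : 0 < p := by linarith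
  set d : ℝ := ((p+1)*p*(p-1)/12) * (p-1)⁻¹ * ((1+β)*(p+1))⁻¹ with hd
  -- positivity of u
  have hbase : ∀ m : ℕ, (0:ℝ) < (1 + m : ℝ) / (1 + β) := by
    intro m
    have : (0:ℝ) < 1 + m := by positivity
    positivity
  have hupos : ∀ m : ℕ, 0 < u β m := fun m => Real.rpow_pos_of_pos (hbase m) _
  have humono : ∀ n : ℕ, u β n < u β (n+1) := by
    intro n
    apply Real.rpow_lt_rpow (hbase n).le _ (by positivity)
    apply div_lt_div_of_pos_right _ h1β
    push_cast
    linarith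
  have hbmono : ∀ n : ℕ, (u β n) ^ (1-β) < (u β (n+1)) ^ (1-β) := by
    intro n
    exact Real.rpow_lt_rpow (hupos n).le (humono n) (by linarith)
  have hbtop : Tendsto (fun m : ℕ => (u β m) ^ (1-β)) atTop atTop := by
    have h1 : Tendsto (fun m : ℕ => (1 + m : ℝ) / (1 + β)) atTop atTop := by
      apply Tendsto.atTop_div_const h1β
      exact tendsto_atTop_add_const_left _ 1 tendsto_natCast_atTop_atTop
    have h2 : Tendsto (fun m : ℕ => u β m) atTop atTop :=
      (tendsto_rpow_atTop (by positivity : (0:ℝ) < 1/β)).comp h1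
    exact (tendsto_rpow_atTop (by linarith : (0:ℝ) < 1 - β)).comp h2
  refine ⟨d, stolz_cesaro _ _ hbmono hbtop ?_⟩
  -- the limiting function
  set Φ : ℝ → ℝ := fun t => ((p+1)*t*(1+(1-t)^p)/2 - 1 + (1-t)^(p+1)) / t^3 *
      (t / (1 - (1-t)^(p-1))) * ((1+β)*(p+1))⁻¹ with hΦ
  have hΦlim : Tendsto Φ (𝓝[>] 0) (𝓝 d) :=
    ((gfun_limit p hp1).mul (hfun_limit p hp1)).mul_const _
  have htlim : Tendsto (fun n : ℕ => ((n:ℝ)+2)⁻¹) atTop (𝓝[>] (0:ℝ)) :=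
    tendsto_inv_atTop_nhdsGT_zero.comp
      (tendsto_atTop_add_const_right _ 2 tendsto_natCast_atTop_atTop)
  have hcomp := hΦlim.comp htlim
  apply hcomp.congr
  intro n
  simp only [Function.comp_apply]
  set x : ℝ := (n:ℝ) + 2 with hxdef
  set t : ℝ := x⁻¹ with htdef
  have hx0 : (0:ℝ) < x := by rw [hxdef]; positivity
  have hx1 : (1:ℝ) < x := by
    rw [hxdef]
    have := Nat.cast_nonneg (α := ℝ) n
    linarith
  have ht0 : 0 < t := by rw [htdef]; positivity
  have ht1 : t < 1 := by rw [htdef]; exact inv_lt_one_of_one_lt₀ hx1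
  have h1t : 0 < 1 - t := by linarith
  have hxt : x = t⁻¹ := by rw [htdef, inv_inv]
  have hXpos : (0:ℝ) < x ^ p := Real.rpow_pos_of_pos hx0 p
  have hEpos : (0:ℝ) < (1+β) ^ p := Real.rpow_pos_of_pos h1β p
  have hT3lt : (1-t) ^ (p-1) < 1 := Real.rpow_lt_one h1t.le (by linarith) (by linarith)
  have hT3pos : (0:ℝ) < (1-t)^(p-1) := Real.rpow_pos_of_pos h1t _
  have e1 : (1:ℝ) + ((n+1 : ℕ) : ℝ) = x := by push_cast; rw [hxdef]; ring
  have e2 : (1:ℝ) + (n : ℝ) = x - 1 := by rw [hxdef]; ring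
  have e3 : x - 1 = x * (1 - t) := by
    rw [htdef]
    field_simp
  have hx1t : (0:ℝ) ≤ x * (1 - t) := by positivity
  have hq1 : (1+β)/β = p + 1 := by rw [hpdef]; field_simp
  have hq2 : 1/β * (1-β) = p - 1 := by rw [hpdef]; field_simp
  have hsum : ∑ k ∈ Finset.Icc 1 (n+1), u β k = (∑ k ∈ Finset.Icc 1 n, u β k) + u β (n+1) :=
    Finset.sum_Icc_succ_top (Nat.le_add_left 1 n) _
  have hb1 : (u β (n+1)) ^ (1-β) = (x^p/x)/((1+β)^p/(1+β)) := by
    simp only [u]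
    rw [e1, ← Real.rpow_mul (by positivity : (0:ℝ) ≤ x/(1+β)), hq2,
      Real.div_rpow hx0.le h1β.le, Real.rpow_sub hx0, Real.rpow_one,
      Real.rpow_sub h1β, Real.rpow_one]
  have hb0 : (u β n) ^ (1-β) = (x^p/x)*(1-t)^(p-1)/((1+β)^p/(1+β)) := by
    simp only [u]
    rw [e2, e3, ← Real.rpow_mul (by positivity : (0:ℝ) ≤ x*(1-t)/(1+β)), hq2,
      Real.div_rpow hx1t h1β.le, Real.mul_rpow hx0.le h1t.le,
      Real.rpow_sub hx0, Real.rpow_one, Real.rpow_sub h1β, Real.rpow_one]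
  have hu1 : u β (n+1) = x^p/(1+β)^p := by
    simp only [u]
    rw [e1, ← hpdef, Real.div_rpow hx0.le h1β.le]
  have hu0 : u β n = x^p * (1-t)^p/(1+β)^p := by
    simp only [u]
    rw [e2, e3, ← hpdef, Real.div_rpow hx1t h1β.le, Real.mul_rpow hx0.le h1t.le]
  have hA1 : ((1 + ((n+1 : ℕ) : ℝ))/(1+β))^((1+β)/β) = x^p*x/((1+β)^p*(1+β)) := by
    rw [e1, hq1, Real.div_rpow hx0.le h1β.le, Real.rpow_add hx0, Real.rpow_one,
      Real.rpow_add h1β, Real.rpow_one]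
  have hA0 : ((1 + (n : ℝ))/(1+β))^((1+β)/β) = x^p*x*(1-t)^(p+1)/((1+β)^p*(1+β)) := by
    rw [e2, e3, hq1, Real.div_rpow hx1t h1β.le, Real.mul_rpow hx0.le h1t.le,
      Real.rpow_add hx0, Real.rpow_one, Real.rpow_add h1β, Real.rpow_one]
  simp only [hΦ]
  rw [hsum, hb1, hb0, hu1, hu0, hA1, hA0]
  have hD : (0:ℝ) < (x^p/x)/((1+β)^p/(1+β)) - (x^p/x)*(1-t)^(p-1)/((1+β)^p/(1+β)) := by
    have heq : (x^p/x)/((1+β)^p/(1+β)) - (x^p/x)*(1-t)^(p-1)/((1+β)^p/(1+β))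
        = (x^p/x)*(1 - (1-t)^(p-1))/((1+β)^p/(1+β)) := by ring
    rw [heq]
    have h3 : (0:ℝ) < 1 - (1-t)^(p-1) := by linarith
    positivity
  set X : ℝ := x^p with hXdef
  set T1 : ℝ := (1-t)^p with hT1def
  set T2 : ℝ := (1-t)^(p+1) with hT2def
  set T3 : ℝ := (1-t)^(p-1) with hT3def
  set E : ℝ := (1+β)^p with hEdef
  clear_value X T1 T2 T3 E
  rw [hxt] at hD ⊢
  clear_value t
  rw [hpdef]
  rw [show X / t⁻¹ / (E / (1+β)) - X / t⁻¹ * T3 / (E / (1+β)) = X * t * (1+β) * (1 - T3) / E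
    from by field_simp [ht0.ne', hEpos.ne', h1β.ne']]
  have hT3ne : 1 - T3 ≠ 0 := by
    have : T3 < 1 := hT3lt
    intro h
    rw [sub_eq_zero] at h
    exact (ne_of_lt this) h.symm
  field_simp [ne_of_gt hD, ht0.ne', hEpos.ne', h1β.ne', hβ0.ne', hXpos.ne', hT3ne]
  ring
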